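/- (Theorem 3, edge-level form) Under the two-stage cluster design with cluster in-experiment probability p and treatment probability π, the estimator τ̂_c(p,π) = τ̂¹_c(p,π) + τ̂²_c(p,π) satisfies E[τ̂_c(p,π)] = (1/n) Σ_{i ≠ j} (β_{i,j} + γ_{i,j} + 2κ_{i,j} ζ_{i,j}), and its bias for the total treatment effect τ is E[τ̂_c(p,π) − τ] = −(1/n) Σ_{i ≠ j} (1 − 2κ_{i,j}) ζ_{i,j}, where κ_{i,j} = π if units i and j belong to the same cluster and κ_{i,j} = pπ otherwise. In particular, when π = 1/2 the bias equals −((1 − p)/n) Σ_{(i,j): i ≠ j, c(i) ≠ c(j)} ζ_{i,j}, i.e., only cross-cluster interaction terms contribute. -/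

import Mathlib

open Finset

noncomputable section

/-- Real-valued indicator of a Boolean. -/
def ind (b : Bool) : ℝ := if b then 1 else 0

/-- Dyadic linear potential-outcome model for an ordered pair `(i, j)`:
`z_{i,j}(W) = α_{i,j} + β_{i,j} W_i + γ_{i,j} W_j + ζ_{i,j} W_i W_j`. -/
def zDyad {n : ℕ} (α β γ ζ : Fin n → Fin n → ℝ) (W : Fin n → ℝ) (i j : Fin n) : ℝ :=
  α i j + β i j * W i + γ i j * W j + ζ i j * W i * W j

/-- Upstream-aggregated outcome `Y_j(W) = Σ_{i ≠ j} z_{i,j}(W)`. -/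
def Yagg {n : ℕ} (α β γ ζ : Fin n → Fin n → ℝ) (W : Fin n → ℝ) (j : Fin n) : ℝ :=
  ∑ i ∈ ({j}ᶜ : Finset (Fin n)), zDyad α β γ ζ W i j

/-- Downstream-aggregated outcome (diffusion metric) `D_j(W) = Σ_{i ≠ j} z_{j,i}(W)`. -/
def Dagg {n : ℕ} (α β γ ζ : Fin n → Fin n → ℝ) (W : Fin n → ℝ) (j : Fin n) : ℝ :=
  ∑ i ∈ ({j}ᶜ : Finset (Fin n)), zDyad α β γ ζ W j i

/-- Expectation over the two-stage cluster design: `b ∈ {0,1}^C` are i.i.d.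
Bernoulli(`p`) cluster in-experiment indicators and `u ∈ {0,1}^n` are i.i.d.
Bernoulli(`q`) treatment coins, all mutually independent. -/
def expectBU (n : ℕ) {C : Type} [Fintype C] [DecidableEq C] (p q : ℝ)
    (f : (C → Bool) → (Fin n → Bool) → ℝ) : ℝ :=
  ∑ b : C → Bool, ∑ u : Fin n → Bool,
    (∏ k, if b k then p else 1 - p) * (∏ i, if u i then q else 1 - q) * f b u

/-- Realized treatment in the two-stage cluster design: `V_i = B_{c(i)}`,
`W_i = V_i U_i` (units outside the experiment receive control). -/
def treatBU {n : ℕ} {C : Type} (c : Fin n → C) (b : C → Bool) (u : Fin n → Bool) :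
    Fin n → ℝ :=
  fun i => ind (b (c i) && u i)

/-- Horvitz–Thompson estimator built from `Y` in the two-stage cluster design:
`τ̂¹_c(p,q)(b,u) = (1/n) Σ_i [V_i W_i Y_i(W)/(pq) − V_i (1 − W_i) Y_i(W)/(p(1 − q))]`. -/
def tauHat1Clu {n : ℕ} {C : Type} (α β γ ζ : Fin n → Fin n → ℝ) (c : Fin n → C)
    (p q : ℝ) (b : C → Bool) (u : Fin n → Bool) : ℝ :=
  (1 / (n : ℝ)) * ∑ i,
    (ind (b (c i)) * treatBU c b u i * Yagg α β γ ζ (treatBU c b u) i / (p * q) -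
      ind (b (c i)) * (1 - treatBU c b u i) * Yagg α β γ ζ (treatBU c b u) i /
        (p * (1 - q)))

/-- Horvitz–Thompson estimator built from `D` in the two-stage cluster design. -/
def tauHat2Clu {n : ℕ} {C : Type} (α β γ ζ : Fin n → Fin n → ℝ) (c : Fin n → C)
    (p q : ℝ) (b : C → Bool) (u : Fin n → Bool) : ℝ :=
  (1 / (n : ℝ)) * ∑ i,
    (ind (b (c i)) * treatBU c b u i * Dagg α β γ ζ (treatBU c b u) i / (p * q) -
      ind (b (c i)) * (1 - treatBU c b u i) * Dagg α β γ ζ (treatBU c b u) i /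
        (p * (1 - q)))

section Aux
variable {n : ℕ} {C : Type} [Fintype C] [DecidableEq C] (p q : ℝ)
variable {n : ℕ} {C : Type} [Fintype C] [DecidableEq C] (p q : ℝ)

lemma ind_and (x y : Bool) : ind (x && y) = ind x * ind y := by
  cases x <;> cases y <;> simp [ind]

lemma expectBU_congr {f g : (C → Bool) → (Fin n → Bool) → ℝ} (h : ∀ b u, f b u = g b u) :
    expectBU n p q f = expectBU n p q g := by
  unfold expectBU
  exact Finset.sum_congr rfl fun b _ => Finset.sum_congr rfl fun u _ => by rw [h]

lemma expectBU_add (f g : (C → Bool) → (Fin n → Bool) → ℝ) :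
    expectBU n p q (fun b u => f b u + g b u) = expectBU n p q f + expectBU n p q g := by
  unfold expectBU
  rw [← Finset.sum_add_distrib]
  refine Finset.sum_congr rfl fun b _ => ?_
  rw [← Finset.sum_add_distrib]
  exact Finset.sum_congr rfl fun u _ => by ring

lemma expectBU_const_mul (r : ℝ) (f : (C → Bool) → (Fin n → Bool) → ℝ) :
    expectBU n p q (fun b u => r * f b u) = r * expectBU n p q f := by
  unfold expectBU
  rw [Finset.mul_sum]
  refine Finset.sum_congr rfl fun b _ => ?_
  rw [Finset.mul_sum]
  exact Finset.sum_congr rfl fun u _ => by ring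

lemma expectBU_sum {ι : Type*} (s : Finset ι) (f : ι → (C → Bool) → (Fin n → Bool) → ℝ) :
    expectBU n p q (fun b u => ∑ x ∈ s, f x b u) = ∑ x ∈ s, expectBU n p q (f x) := by
  classical
  induction s using Finset.induction_on with
  | empty => simp [expectBU]
  | @insert _ _ h ih =>
      rw [Finset.sum_insert h, ← ih, ← expectBU_add]
      exact expectBU_congr _ _ fun b u => by rw [Finset.sum_insert h]

lemma expectBU_prod (gB : C → Bool → ℝ) (gU : Fin n → Bool → ℝ) :
    expectBU n p q (fun b u => (∏ k, gB k (b k)) * (∏ i, gU i (u i))) =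
      (∏ k, (p * gB k true + (1 - p) * gB k false)) *
        (∏ i, (q * gU i true + (1 - q) * gU i false)) := by
  unfold expectBU
  have h : ∀ (b : C → Bool) (u : Fin n → Bool),
      (∏ k, if b k then p else 1 - p) * (∏ i, if u i then q else 1 - q) *
        ((∏ k, gB k (b k)) * (∏ i, gU i (u i)))
      = (∏ k, (if b k then p else 1 - p) * gB k (b k)) *
        (∏ i, (if u i then q else 1 - q) * gU i (u i)) := by
    intro b u
    rw [Finset.prod_mul_distrib, Finset.prod_mul_distrib]; ring
  simp only [h]
  have h1 := Finset.sum_prod_piFinset (Finset.univ : Finset Bool)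
    (fun (k : C) (x : Bool) => (if x = true then p else 1 - p) * gB k x)
  have h2 := Finset.sum_prod_piFinset (Finset.univ : Finset Bool)
    (fun (i : Fin n) (x : Bool) => (if x = true then q else 1 - q) * gU i x)
  rw [← Finset.sum_mul_sum, ← Fintype.piFinset_univ, h1, ← Fintype.piFinset_univ, h2]
  simp

end Aux

section Aux2
variable {n : ℕ} {C : Type} [Fintype C] [DecidableEq C] (p q : ℝ)

lemma prod_ite_single {ι : Type*} [Fintype ι] [DecidableEq ι] (k : ι) (r : ℝ) :
    (∏ x : ι, if x = k then r else 1) = r :=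
  Fintype.prod_ite_eq' k (fun _ => r)

lemma prod_ite_or {ι : Type*} [Fintype ι] [DecidableEq ι] (k k' : ι) (r : ℝ) :
    (∏ x : ι, if x = k ∨ x = k' then r else 1) = if k = k' then r else r ^ 2 := by
  by_cases h : k = k'
  · subst h
    rw [if_pos rfl, ← prod_ite_single k r]
    exact Finset.prod_congr rfl fun x _ => by by_cases hx : x = k <;> simp [hx]
  · rw [if_neg h]
    have key : ∀ x : ι, (if x = k ∨ x = k' then r else 1) =
        (if x = k then r else 1) * (if x = k' then r else 1) := by
      intro x
      by_cases h1 : x = k <;> by_cases h2 : x = k' <;> simp_all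
    rw [Finset.prod_congr rfl fun x _ => key x, Finset.prod_mul_distrib,
      prod_ite_single, prod_ite_single]
    ring

lemma E_B (k : C) : expectBU n p q (fun b (_ : Fin n → Bool) => ind (b k)) = p := by
  calc expectBU n p q (fun b (_ : Fin n → Bool) => ind (b k))
      = expectBU n p q (fun b _ =>
        (∏ k'', if k'' = k then ind (b k'') else 1) * (∏ _i : Fin n, (1:ℝ))) :=
        expectBU_congr p q fun b u => by
          rw [Fintype.prod_ite_eq', Finset.prod_const_one, mul_one]
    _ = (∏ k'', (p * (if k'' = k then ind true else 1) +
          (1 - p) * (if k'' = k then ind false else 1))) *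
        (∏ _i : Fin n, (q * 1 + (1 - q) * 1)) :=
        expectBU_prod p q (fun k'' x => if k'' = k then ind x else 1) (fun _ _ => 1)
    _ = p := by
        have h1 : ∀ k'' : C, (p * (if k'' = k then ind true else 1) +
            (1 - p) * (if k'' = k then ind false else 1)) = (if k'' = k then p else 1) :=
          fun k'' => by by_cases h : k'' = k <;> simp [h, ind]
        rw [Finset.prod_congr rfl fun x _ => h1 x, prod_ite_single]
        simp

lemma E_BU (k : C) (i : Fin n) :
    expectBU n p q (fun b u => ind (b k) * ind (u i)) = p * q := by
  calc expectBU n p q (fun b u => ind (b k) * ind (u i))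
      = expectBU n p q (fun b u =>
        (∏ k'', if k'' = k then ind (b k'') else 1) *
        (∏ m, if m = i then ind (u m) else 1)) :=
        expectBU_congr p q fun b u => by rw [Fintype.prod_ite_eq', Fintype.prod_ite_eq']
    _ = (∏ k'', (p * (if k'' = k then ind true else 1) +
          (1 - p) * (if k'' = k then ind false else 1))) *
        (∏ m, (q * (if m = i then ind true else 1) +
          (1 - q) * (if m = i then ind false else 1))) :=
        expectBU_prod p q (fun k'' x => if k'' = k then ind x else 1)
          (fun m x => if m = i then ind x else 1)
    _ = p * q := by
        have h1 : ∀ k'' : C, (p * (if k'' = k then ind true else 1) +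
            (1 - p) * (if k'' = k then ind false else 1)) = (if k'' = k then p else 1) :=
          fun k'' => by by_cases h : k'' = k <;> simp [h, ind]
        have h2 : ∀ m : Fin n, (q * (if m = i then ind true else 1) +
            (1 - q) * (if m = i then ind false else 1)) = (if m = i then q else 1) :=
          fun m => by by_cases h : m = i <;> simp [h, ind]
        rw [Finset.prod_congr rfl fun x _ => h1 x, Finset.prod_congr rfl fun x _ => h2 x,
          prod_ite_single, prod_ite_single]

lemma E_BBU (k k' : C) (j : Fin n) :
    expectBU n p q (fun b u => ind (b k) * ind (b k') * ind (u j)) =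
      (if k = k' then p else p ^ 2) * q := by
  calc expectBU n p q (fun b u => ind (b k) * ind (b k') * ind (u j))
      = expectBU n p q (fun b u =>
        (∏ k'', (if k'' = k then ind (b k'') else 1) * (if k'' = k' then ind (b k'') else 1)) *
        (∏ m, if m = j then ind (u m) else 1)) :=
        expectBU_congr p q fun b u => by
          rw [Finset.prod_mul_distrib, Fintype.prod_ite_eq', Fintype.prod_ite_eq',
            Fintype.prod_ite_eq']
    _ = (∏ k'', (p * ((if k'' = k then ind true else 1) * (if k'' = k' then ind true else 1)) +
          (1 - p) * ((if k'' = k then ind false else 1) * (if k'' = k' then ind false else 1)))) *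
        (∏ m, (q * (if m = j then ind true else 1) +
          (1 - q) * (if m = j then ind false else 1))) :=
        expectBU_prod p q
          (fun k'' x => (if k'' = k then ind x else 1) * (if k'' = k' then ind x else 1))
          (fun m x => if m = j then ind x else 1)
    _ = (if k = k' then p else p ^ 2) * q := by
        have h1 : ∀ k'' : C,
            (p * ((if k'' = k then ind true else 1) * (if k'' = k' then ind true else 1)) +
              (1 - p) * ((if k'' = k then ind false else 1) * (if k'' = k' then ind false else 1)))
            = (if k'' = k ∨ k'' = k' then p else 1) := fun k'' => by
          by_cases h : k'' = k <;> by_cases h' : k'' = k' <;> simp [h, h', ind]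
        have h2 : ∀ m : Fin n, (q * (if m = j then ind true else 1) +
            (1 - q) * (if m = j then ind false else 1)) = (if m = j then q else 1) :=
          fun m => by by_cases h : m = j <;> simp [h, ind]
        rw [Finset.prod_congr rfl fun x _ => h1 x, Finset.prod_congr rfl fun x _ => h2 x,
          prod_ite_or, prod_ite_single]

lemma E_BBUU (k k' : C) (i j : Fin n) (hij : i ≠ j) :
    expectBU n p q (fun b u => ind (b k) * ind (b k') * ind (u i) * ind (u j)) =
      (if k = k' then p else p ^ 2) * q ^ 2 := by
  calc expectBU n p q (fun b u => ind (b k) * ind (b k') * ind (u i) * ind (u j))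
      = expectBU n p q (fun b u =>
        (∏ k'', (if k'' = k then ind (b k'') else 1) * (if k'' = k' then ind (b k'') else 1)) *
        (∏ m, (if m = i then ind (u m) else 1) * (if m = j then ind (u m) else 1))) :=
        expectBU_congr p q fun b u => by
          rw [Finset.prod_mul_distrib, Finset.prod_mul_distrib, Fintype.prod_ite_eq',
            Fintype.prod_ite_eq', Fintype.prod_ite_eq', Fintype.prod_ite_eq']
          ring
    _ = (∏ k'', (p * ((if k'' = k then ind true else 1) * (if k'' = k' then ind true else 1)) +
          (1 - p) * ((if k'' = k then ind false else 1) * (if k'' = k' then ind false else 1)))) *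
        (∏ m, (q * ((if m = i then ind true else 1) * (if m = j then ind true else 1)) +
          (1 - q) * ((if m = i then ind false else 1) * (if m = j then ind false else 1)))) :=
        expectBU_prod p q
          (fun k'' x => (if k'' = k then ind x else 1) * (if k'' = k' then ind x else 1))
          (fun m x => (if m = i then ind x else 1) * (if m = j then ind x else 1))
    _ = (if k = k' then p else p ^ 2) * q ^ 2 := by
        have h1 : ∀ k'' : C,
            (p * ((if k'' = k then ind true else 1) * (if k'' = k' then ind true else 1)) +
              (1 - p) * ((if k'' = k then ind false else 1) * (if k'' = k' then ind false else 1)))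
            = (if k'' = k ∨ k'' = k' then p else 1) := fun k'' => by
          by_cases h : k'' = k <;> by_cases h' : k'' = k' <;> simp [h, h', ind]
        have h2 : ∀ m : Fin n,
            (q * ((if m = i then ind true else 1) * (if m = j then ind true else 1)) +
              (1 - q) * ((if m = i then ind false else 1) * (if m = j then ind false else 1)))
            = (if m = i ∨ m = j then q else 1) := fun m => by
          by_cases h : m = i <;> by_cases h' : m = j <;> simp [h, h', ind]
        rw [Finset.prod_congr rfl fun x _ => h1 x, Finset.prod_congr rfl fun x _ => h2 x,
          prod_ite_or, prod_ite_or, if_neg hij]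

end Aux2

/-- Canonical per-edge integrand used to decompose the estimators. -/
def edgeT {n : ℕ} {C : Type} (k k' : C) (i j : Fin n) (p q a bb g z : ℝ)
    (b : C → Bool) (u : Fin n → Bool) : ℝ :=
  ind (b k) * (ind (b k) * ind (u i)) *
      (a + bb * (ind (b k') * ind (u j)) + g * (ind (b k) * ind (u i)) +
        z * (ind (b k') * ind (u j)) * (ind (b k) * ind (u i))) / (p * q) -
    ind (b k) * (1 - ind (b k) * ind (u i)) *
      (a + bb * (ind (b k') * ind (u j)) + g * (ind (b k) * ind (u i)) +
        z * (ind (b k') * ind (u j)) * (ind (b k) * ind (u i))) / (p * (1 - q))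

section Aux3
variable {n : ℕ} {C : Type} [Fintype C] [DecidableEq C] (p q : ℝ)

lemma edge_core (hp0 : 0 < p) (hq0 : 0 < q) (hq1 : q < 1)
    (k k' : C) (i j : Fin n) (hij : i ≠ j) (a bb g z : ℝ) :
    expectBU n p q (edgeT k k' i j p q a bb g z) =
      g + (if k = k' then q else p * q) * z := by
  have hstep : expectBU n p q (edgeT k k' i j p q a bb g z) = expectBU n p q (fun b u =>
      (-a / (p * (1 - q))) * ind (b k) +
      ((a + g) / (p * q) + a / (p * (1 - q))) * (ind (b k) * ind (u i)) +
      ((-bb / (p * (1 - q))) * (ind (b k) * ind (b k') * ind (u j)) +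
      ((bb + z) / (p * q) + bb / (p * (1 - q))) *
        (ind (b k) * ind (b k') * ind (u i) * ind (u j)))) := by
    apply expectBU_congr
    intro b u
    unfold edgeT
    cases hb : b k <;> cases hb' : b k' <;> cases hu : u i <;> cases hu' : u j <;>
      simp [ind] <;> ring
  rw [hstep, expectBU_add, expectBU_add, expectBU_add, expectBU_const_mul,
    expectBU_const_mul, expectBU_const_mul, expectBU_const_mul,
    E_B, E_BU, E_BBU, E_BBUU p q k k' i j hij]
  have hp : p ≠ 0 := ne_of_gt hp0
  have hq : q ≠ 0 := ne_of_gt hq0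
  have hq1' : (1 : ℝ) - q ≠ 0 := by intro h; apply absurd hq1; simp; linarith
  by_cases hkk : k = k' <;> simp only [hkk, if_pos, if_neg, ite_true, ite_false] <;>
    field_simp <;> ring

end Aux3

section Aux4
variable {n : ℕ}

lemma sum_compl_eq_sum_ite (F : Fin n → Fin n → ℝ) (i : Fin n) :
    ∑ j ∈ ({i}ᶜ : Finset (Fin n)), F i j = ∑ j, if j = i then 0 else F i j := by
  rw [show ({i}ᶜ : Finset (Fin n)) = Finset.univ.filter (fun j => ¬ j = i) by ext x; simp,
    Finset.sum_filter]
  exact Finset.sum_congr rfl fun j _ => by by_cases h : j = i <;> simp [h]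

lemma sum_pairs_swap (F : Fin n → Fin n → ℝ) :
    ∑ i, ∑ j ∈ ({i}ᶜ : Finset (Fin n)), F i j =
      ∑ i, ∑ j ∈ ({i}ᶜ : Finset (Fin n)), F j i := by
  rw [Finset.sum_congr rfl fun i _ => sum_compl_eq_sum_ite F i, Finset.sum_comm]
  refine Finset.sum_congr rfl fun i _ => ?_
  rw [sum_compl_eq_sum_ite (fun a b => F b a) i]
  refine Finset.sum_congr rfl fun j _ => ?_
  by_cases h : i = j
  · subst h; simp
  · rw [if_neg h, if_neg (Ne.symm h)]
end Aux4

section Main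
variable {n : ℕ} {C : Type} [Fintype C] [DecidableEq C]

lemma main_expect (α β γ ζ : Fin n → Fin n → ℝ) (c : Fin n → C) (p q : ℝ)
    (hp0 : 0 < p) (hq0 : 0 < q) (hq1 : q < 1) :
    expectBU n p q
        (fun b u => tauHat1Clu α β γ ζ c p q b u + tauHat2Clu α β γ ζ c p q b u) =
      (1 / (n : ℝ)) * ∑ i, ∑ j ∈ ({i}ᶜ : Finset (Fin n)),
        ((γ j i + (if c i = c j then q else p * q) * ζ j i) +
          (β i j + (if c i = c j then q else p * q) * ζ i j)) := by
  have step1 : ∀ (b : C → Bool) (u : Fin n → Bool),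
      tauHat1Clu α β γ ζ c p q b u + tauHat2Clu α β γ ζ c p q b u =
        (1 / (n : ℝ)) * ∑ i, ∑ j ∈ ({i}ᶜ : Finset (Fin n)),
          (edgeT (c i) (c j) i j p q (α j i) (β j i) (γ j i) (ζ j i) b u +
            edgeT (c i) (c j) i j p q (α i j) (γ i j) (β i j) (ζ i j) b u) := by
    intro b u
    unfold tauHat1Clu tauHat2Clu
    rw [← mul_add, ← Finset.sum_add_distrib]
    congr 1
    refine Finset.sum_congr rfl fun i _ => ?_
    unfold Yagg Dagg
    rw [Finset.sum_add_distrib]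
    congr 1
    · rw [Finset.mul_sum, Finset.sum_div, Finset.mul_sum, Finset.sum_div,
        ← Finset.sum_sub_distrib]
      refine Finset.sum_congr rfl fun j _ => ?_
      unfold zDyad treatBU edgeT
      simp only [ind_and]
      try ring
    · rw [Finset.mul_sum, Finset.sum_div, Finset.mul_sum, Finset.sum_div,
        ← Finset.sum_sub_distrib]
      refine Finset.sum_congr rfl fun j _ => ?_
      unfold zDyad treatBU edgeT
      simp only [ind_and]
      try ring
  rw [expectBU_congr p q step1, expectBU_const_mul]
  congr 1
  rw [expectBU_sum]
  refine Finset.sum_congr rfl fun i _ => ?_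
  rw [expectBU_sum]
  refine Finset.sum_congr rfl fun j hj => ?_
  have hij : i ≠ j := fun h => (Finset.notMem_singleton.mp (Finset.mem_compl.mp hj)) h.symm
  rw [expectBU_add, edge_core p q hp0 hq0 hq1 _ _ _ _ hij,
    edge_core p q hp0 hq0 hq1 _ _ _ _ hij]

end Main

/-- Theorem 3, edge-level form: Under the two-stage cluster design with
cluster in-experiment probability `p` and treatment probability `q`, the combined
estimator `τ̂_c(p,q) = τ̂¹_c(p,q) + τ̂²_c(p,q)` satisfies
`E[τ̂_c(p,q)] = (1/n) Σ_{i ≠ j} (β_{i,j} + γ_{i,j} + 2κ_{i,j} ζ_{i,j})`, and its bias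
for the total treatment effect `τ = (1/n) Σ_j (Y_j(1) − Y_j(0))` is
`E[τ̂_c(p,q) − τ] = −(1/n) Σ_{i ≠ j} (1 − 2κ_{i,j}) ζ_{i,j}`, where `κ_{i,j} = q` if
`i` and `j` are in the same cluster and `κ_{i,j} = pq` otherwise. In particular, when
`q = 1/2` the bias equals `−((1 − p)/n) Σ_{i ≠ j, c(i) ≠ c(j)} ζ_{i,j}`. -/
theorem expect_and_bias_tauHatClu_combined
    (n : ℕ) (hn : 1 ≤ n) (α β γ ζ : Fin n → Fin n → ℝ)
    (C : Type) [Fintype C] [DecidableEq C] (c : Fin n → C)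
    (p q : ℝ) (hp0 : 0 < p) (hp1 : p ≤ 1) (hq0 : 0 < q) (hq1 : q < 1) :
    expectBU n p q
        (fun b u => tauHat1Clu α β γ ζ c p q b u + tauHat2Clu α β γ ζ c p q b u) =
      (1 / (n : ℝ)) * ∑ j, ∑ i ∈ ({j}ᶜ : Finset (Fin n)),
        (β i j + γ i j + 2 * (if c i = c j then q else p * q) * ζ i j) ∧
    expectBU n p q
        (fun b u => tauHat1Clu α β γ ζ c p q b u + tauHat2Clu α β γ ζ c p q b u) -
        (1 / (n : ℝ)) *
          ∑ j, (Yagg α β γ ζ (fun _ => (1 : ℝ)) j - Yagg α β γ ζ (fun _ => (0 : ℝ)) j) =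
      -(1 / (n : ℝ)) * ∑ j, ∑ i ∈ ({j}ᶜ : Finset (Fin n)),
        ((1 - 2 * (if c i = c j then q else p * q)) * ζ i j) ∧
    (q = 1 / 2 →
      expectBU n p q
          (fun b u => tauHat1Clu α β γ ζ c p q b u + tauHat2Clu α β γ ζ c p q b u) -
          (1 / (n : ℝ)) *
            ∑ j, (Yagg α β γ ζ (fun _ => (1 : ℝ)) j -
              Yagg α β γ ζ (fun _ => (0 : ℝ)) j) =
        -((1 - p) / (n : ℝ)) *
          ∑ j, ∑ i ∈ ({j}ᶜ : Finset (Fin n)).filter (fun i => c i ≠ c j), ζ i j) := by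
  -- Part 1: the expectation formula
  have EV : expectBU n p q
      (fun b u => tauHat1Clu α β γ ζ c p q b u + tauHat2Clu α β γ ζ c p q b u) =
      (1 / (n : ℝ)) * ∑ j, ∑ i ∈ ({j}ᶜ : Finset (Fin n)),
        (β i j + γ i j + 2 * (if c i = c j then q else p * q) * ζ i j) := by
    rw [main_expect α β γ ζ c p q hp0 hq0 hq1]
    congr 1
    have split : ∑ i, ∑ j ∈ ({i}ᶜ : Finset (Fin n)),
        ((γ j i + (if c i = c j then q else p * q) * ζ j i) +
          (β i j + (if c i = c j then q else p * q) * ζ i j)) =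
        (∑ i, ∑ j ∈ ({i}ᶜ : Finset (Fin n)),
          (γ j i + (if c i = c j then q else p * q) * ζ j i)) +
        ∑ i, ∑ j ∈ ({i}ᶜ : Finset (Fin n)),
          (β i j + (if c i = c j then q else p * q) * ζ i j) := by
      rw [← Finset.sum_add_distrib]
      exact Finset.sum_congr rfl fun i _ => by rw [← Finset.sum_add_distrib]
    rw [split,
      sum_pairs_swap (fun i j => (β i j + (if c i = c j then q else p * q) * ζ i j)),
      ← Finset.sum_add_distrib]
    refine Finset.sum_congr rfl fun i _ => ?_
    rw [← Finset.sum_add_distrib]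
    refine Finset.sum_congr rfl fun j _ => ?_
    by_cases h : c i = c j
    · simp only [if_pos h, if_pos h.symm]; ring
    · simp only [if_neg h, if_neg (fun hh : c j = c i => h hh.symm)]; ring
  -- the total treatment effect
  have TAU : ∀ j, Yagg α β γ ζ (fun _ => (1 : ℝ)) j - Yagg α β γ ζ (fun _ => (0 : ℝ)) j =
      ∑ i ∈ ({j}ᶜ : Finset (Fin n)), (β i j + γ i j + ζ i j) := by
    intro j
    unfold Yagg
    rw [← Finset.sum_sub_distrib]
    refine Finset.sum_congr rfl fun i _ => ?_
    unfold zDyad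
    ring
  have BIAS : expectBU n p q
      (fun b u => tauHat1Clu α β γ ζ c p q b u + tauHat2Clu α β γ ζ c p q b u) -
      (1 / (n : ℝ)) *
        ∑ j, (Yagg α β γ ζ (fun _ => (1 : ℝ)) j - Yagg α β γ ζ (fun _ => (0 : ℝ)) j) =
      -(1 / (n : ℝ)) * ∑ j, ∑ i ∈ ({j}ᶜ : Finset (Fin n)),
        ((1 - 2 * (if c i = c j then q else p * q)) * ζ i j) := by
    rw [EV, Finset.sum_congr rfl fun j _ => TAU j, ← mul_sub, neg_mul, ← mul_neg]
    congr 1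
    rw [← Finset.sum_sub_distrib, ← Finset.sum_neg_distrib]
    refine Finset.sum_congr rfl fun j _ => ?_
    rw [← Finset.sum_sub_distrib, ← Finset.sum_neg_distrib]
    refine Finset.sum_congr rfl fun i _ => ?_
    ring
  refine ⟨EV, BIAS, fun hq => ?_⟩
  rw [BIAS, hq]
  have : ∀ j, ∑ i ∈ ({j}ᶜ : Finset (Fin n)),
      ((1 - 2 * (if c i = c j then (1:ℝ)/2 else p * (1/2))) * ζ i j) =
      (1 - p) * ∑ i ∈ ({j}ᶜ : Finset (Fin n)).filter (fun i => c i ≠ c j), ζ i j := by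
    intro j
    rw [Finset.mul_sum, Finset.sum_filter]
    refine Finset.sum_congr rfl fun i _ => ?_
    by_cases h : c i = c j
    · simp [h]
    · rw [if_neg h, if_pos h]; ring
  rw [Finset.sum_congr rfl fun j _ => this j, ← Finset.mul_sum]
  ring
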